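/- arXiv:2004.02190 — 2 statements merged into one kernel-verified Lean document; each statement's English description precedes it below -/
import Mathlib

section
/- Let p be a prime and n, m ≥ 1. Then GL_n(ZMod p^m), the automorphism group of the homocyclic abelian group (ZMod p^m)^n, contains an element of order p^n − 1. -/
open Matrix
open scoped MatrixGroups

private theorem step_dvd' {S : Type*} [Ring S] {p : ℕ} (j : ℕ) (hj : 1 ≤ j) (a : S)
    (h : ((p : S)) ^ j ∣ a - 1) : ((p : S)) ^ (j + 1) ∣ a ^ p - 1 := by
  obtain ⟨b, hb⟩ := h
  have ha : a = (p : S) ^ j * b + 1 := by rw [← hb]; rw [sub_add_cancel]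
  have hcomm : Commute ((p : S) ^ j * b) (1 : S) := Commute.one_right _
  rw [ha, Commute.add_pow hcomm]
  simp only [one_pow, mul_one]
  rw [Finset.sum_range_succ']
  simp only [pow_zero, Nat.choose_zero_right, Nat.cast_one, one_mul, add_sub_cancel_right]
  apply Finset.dvd_sum
  intro k hk
  have hpb : Commute ((p:S)) b := Nat.cast_commute p b
  rcases Nat.eq_zero_or_pos k with rfl | hk1
  · simp only [zero_add, pow_one, Nat.choose_one_right]
    refine ⟨b, ?_⟩
    rw [pow_succ, mul_assoc, mul_assoc, hpb.eq]
  · have hmp : ((p:S) ^ j * b) ^ (k+1) = (p:S) ^ (j*(k+1)) * b ^ (k+1) := by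
      rw [(hpb.pow_left j).mul_pow, ← pow_mul]
    rw [hmp]
    have hle : j + 1 ≤ j * (k + 1) := by nlinarith
    exact ((pow_dvd_pow _ hle).mul_right _).mul_right _

private theorem iter_dvd' {S : Type*} [Ring S] {p : ℕ} (a : S)
    (h : ((p : S)) ∣ a - 1) : ∀ k, ((p : S)) ^ (1 + k) ∣ a ^ (p ^ k) - 1 := by
  intro k
  induction k with
  | zero => simpa using h
  | succ k ih =>
      have h2 := step_dvd' (1 + k) (by omega) (a ^ (p ^ k)) ih
      rw [← pow_mul, ← pow_succ] at h2
      rw [show 1 + (k + 1) = 1 + k + 1 by omega]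
      exact h2

private theorem ker_unipotent' (p n m : ℕ) (hp : p.Prime) (hm : 1 ≤ m)
    (red : Matrix (Fin n) (Fin n) (ZMod (p ^ m)) →+* Matrix (Fin n) (Fin n) (ZMod p))
    (hredeq : red = (ZMod.castHom (dvd_pow_self p (Nat.one_le_iff_ne_zero.mp hm)) (ZMod p)).mapMatrix)
    (A : Matrix (Fin n) (Fin n) (ZMod (p ^ m)))
    (hA : red A = 1) :
    A ^ (p ^ (m - 1)) = 1 := by
  haveI : Fact p.Prime := ⟨hp⟩
  have hchar : ((p : Matrix (Fin n) (Fin n) (ZMod (p ^ m)))) ^ m = 0 := by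
    rw [← Nat.cast_pow, ← Matrix.diagonal_natCast]
    ext i j
    simp [Matrix.diagonal_apply, ZMod.natCast_self]
  have hdvd : ((p : Matrix (Fin n) (Fin n) (ZMod (p ^ m)))) ∣ A - 1 := by
    refine ⟨Matrix.of fun i j => ((((A - 1) i j).val / p : ℕ) : ZMod (p ^ m)), ?_⟩
    ext i j
    have h0 : red (A - 1) = 0 := by rw [map_sub, hA, _root_.map_one, sub_self]
    have h0' : (ZMod.castHom (dvd_pow_self p (Nat.one_le_iff_ne_zero.mp hm)) (ZMod p)) ((A - 1) i j) = 0 := by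
      have h1 := congrFun (congrFun (congrArg (fun M : Matrix (Fin n) (Fin n) (ZMod p) => (M : Matrix (Fin n) (Fin n) (ZMod p))) h0) i) j
      rw [hredeq] at h1
      simpa [RingHom.mapMatrix_apply, Matrix.map_apply] using h1
    have hval : p ∣ ((A - 1) i j).val := by
      rw [ZMod.castHom_apply, ZMod.cast_eq_val] at h0'
      exact (ZMod.natCast_eq_zero_iff _ p).mp h0'
    have hentry : ((p : Matrix (Fin n) (Fin n) (ZMod (p ^ m))) *
        Matrix.of (fun i j => ((((A - 1) i j).val / p : ℕ) : ZMod (p ^ m)))) i j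
        = (p : ZMod (p ^ m)) * ((((A - 1) i j).val / p : ℕ) : ZMod (p ^ m)) := by
      rw [← nsmul_eq_mul, Matrix.smul_apply, nsmul_eq_mul]
      simp
    rw [hentry, show ((p : ZMod (p ^ m))) = ((p : ℕ) : ZMod (p ^ m)) from rfl, ← Nat.cast_mul,
      Nat.mul_div_cancel' hval, ZMod.natCast_val, ZMod.cast_id]
  have hfin := iter_dvd' A hdvd (m - 1)
  rw [show 1 + (m - 1) = m by omega, hchar] at hfin
  obtain ⟨c, hc⟩ := hfin
  rw [zero_mul] at hc
  exact sub_eq_zero.mp hc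

private theorem singer_field' (p n : ℕ) (hp : p.Prime) (hn : 1 ≤ n) :
    ∃ g : GL (Fin n) (ZMod p), orderOf g = p ^ n - 1 := by
  haveI : Fact p.Prime := ⟨hp⟩
  set F := GaloisField p n
  have hn0 : n ≠ 0 := by omega
  have b : Module.Basis (Fin n) (ZMod p) F :=
    Module.finBasisOfFinrankEq (ZMod p) F (GaloisField.finrank p hn0)
  classical
  haveI : Fintype F := Fintype.ofFinite F
  obtain ⟨ζ, hζ⟩ := IsCyclic.exists_generator (α := Fˣ)
  have hord : orderOf ζ = p ^ n - 1 := by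
    have h1 := orderOf_eq_card_of_forall_mem_zpowers hζ
    rw [h1, Nat.card_eq_fintype_card, Fintype.card_units, ← Nat.card_eq_fintype_card,
      GaloisField.card p n hn0]
  let φ : F →* Matrix (Fin n) (Fin n) (ZMod p) := (Algebra.leftMulMatrix b).toMonoidHom
  have hinj : Function.Injective φ := Algebra.leftMulMatrix_injective b
  refine ⟨Units.map φ ζ, ?_⟩
  rw [orderOf_injective (Units.map φ) (Units.map_injective hinj) ζ, hord]

/-- For every prime `p` and `n, m ≥ 1`, the group `GL n (ZMod (p ^ m))` — the automorphism
group of the homocyclic abelian group `(ZMod (p ^ m)) ^ n` — contains an element of order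
`p ^ n - 1`. -/
theorem exists_singer_cycle_homocyclic (p n m : ℕ) (hp : p.Prime) (hn : 1 ≤ n) (hm : 1 ≤ m) :
    ∃ g : GL (Fin n) (ZMod (p ^ m)), orderOf g = p ^ n - 1 := by
  haveI : Fact p.Prime := ⟨hp⟩
  obtain ⟨g1, hg1⟩ := singer_field' p n hp hn
  set red : Matrix (Fin n) (Fin n) (ZMod (p ^ m)) →+* Matrix (Fin n) (Fin n) (ZMod p) :=
    (ZMod.castHom (dvd_pow_self p (Nat.one_le_iff_ne_zero.mp hm)) (ZMod p)).mapMatrix with hredeq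
  -- lift g1 to an invertible matrix over ZMod (p^m)
  set N : Matrix (Fin n) (Fin n) (ZMod (p ^ m)) :=
    Matrix.of (fun i j => (((g1 : Matrix (Fin n) (Fin n) (ZMod p)) i j).val : ZMod (p ^ m)))
    with hN
  have hredN : red N = (g1 : Matrix (Fin n) (Fin n) (ZMod p)) := by
    ext i j
    simp [hredeq, hN, RingHom.mapMatrix_apply, Matrix.map_apply, ZMod.natCast_val, ZMod.cast_id]
  have hdetred : (ZMod.castHom (dvd_pow_self p (Nat.one_le_iff_ne_zero.mp hm)) (ZMod p)) N.det
      = (g1 : Matrix (Fin n) (Fin n) (ZMod p)).det := by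
    rw [← hredN, hredeq, RingHom.map_det]
  have hdet1 : IsUnit ((g1 : Matrix (Fin n) (Fin n) (ZMod p)).det) :=
    (Matrix.isUnit_iff_isUnit_det _).mp g1.isUnit
  have hNdet : IsUnit N.det := by
    have hne : (ZMod.castHom (dvd_pow_self p (Nat.one_le_iff_ne_zero.mp hm)) (ZMod p)) N.det ≠ 0 := by
      rw [hdetred]; exact hdet1.ne_zero
    have hnd : ¬ p ∣ (N.det).val := by
      intro hd
      apply hne
      rw [ZMod.castHom_apply, ZMod.cast_eq_val]
      exact (ZMod.natCast_eq_zero_iff _ p).mpr hd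
    have hco : (N.det).val.Coprime (p ^ m) :=
      Nat.Coprime.pow_right m ((hp.coprime_iff_not_dvd.mpr hnd).symm)
    have := (ZMod.isUnit_iff_coprime (N.det).val (p ^ m)).mpr hco
    rwa [ZMod.natCast_val, ZMod.cast_id] at this
  have hNunit : IsUnit N := (Matrix.isUnit_iff_isUnit_det _).mpr hNdet
  obtain ⟨g', hg'⟩ := hNunit
  -- g' : GL (Fin n) (ZMod (p^m)) lifting g1
  let f : GL (Fin n) (ZMod (p ^ m)) →* GL (Fin n) (ZMod p) := Units.map (red : _ →* _)
  have hfg' : f g' = g1 := by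
    apply Units.ext
    show red (g' : Matrix (Fin n) (Fin n) (ZMod (p ^ m))) = _
    rw [hg', hredN]
  have hq : 1 ≤ p ^ n - 1 := by
    have : 2 ≤ p := hp.two_le
    have : 2 ≤ p ^ n := le_trans this (Nat.le_self_pow (by omega) p)
    omega
  set t := orderOf g' with ht
  have htpos : 0 < t := orderOf_pos g'
  have hdvd1 : (p ^ n - 1) ∣ t := by
    rw [← hg1, ← hfg']
    exact orderOf_map_dvd f g'
  set c := orderOf (g' ^ (p ^ n - 1)) with hc
  have hcval : c = t / (p ^ n - 1) := by
    rw [hc, orderOf_pow, Nat.gcd_eq_right hdvd1]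
  have hck : g' ^ (p ^ n - 1) ∈ MonoidHom.ker f := by
    rw [MonoidHom.mem_ker, map_pow, hfg', ← hg1, pow_orderOf_eq_one]
  have hcdvd : c ∣ p ^ (m - 1) := by
    apply orderOf_dvd_of_pow_eq_one
    apply Units.ext
    show ((g' ^ (p ^ n - 1)) : Matrix (Fin n) (Fin n) (ZMod (p ^ m))) ^ (p ^ (m - 1)) = 1
    · rw [MonoidHom.mem_ker] at hck
      have : red ((g' ^ (p ^ n - 1) : GL (Fin n) (ZMod (p ^ m))) : Matrix (Fin n) (Fin n) (ZMod (p ^ m))) = 1 := by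
        have := congrArg (fun u : GL (Fin n) (ZMod p) => (u : Matrix (Fin n) (Fin n) (ZMod p))) hck
        exact this
      exact ker_unipotent' p n m hp hm red hredeq _ this
  have hcpos : 0 < c := orderOf_pos _
  have ht_eq : t = (p ^ n - 1) * c := by
    rw [hcval, Nat.mul_div_cancel' hdvd1]
  refine ⟨g' ^ c, ?_⟩
  rw [orderOf_pow, ← ht, ht_eq, Nat.gcd_eq_right ⟨p ^ n - 1, by ring⟩,
    Nat.mul_div_cancel _ hcpos]
end

section
/- Let p be a prime and n, m ≥ 1. Let E be a subgroup of GL_n(ZMod p^m) whose order is not divisible by p and which contains an element of order p^n − 1, and let H be a nontrivial normal subgroup of E. Then H has no nonzero fixed points on Q = (ZMod p^m)^n: the only v ∈ (ZMod p^m)^n satisfying h • v = v for all h ∈ H is v = 0. -/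
open Matrix
open scoped MatrixGroups

private lemma aux_pow_dvd_choose_mul_pow (p m i : ℕ) (hp : p.Prime) (hi : 1 ≤ i) :
    p ^ m ∣ (p ^ m).choose i * p ^ i := by
  rcases le_or_gt m i with h | h
  · exact Dvd.dvd.mul_left (pow_dvd_pow p h) _
  have hpm1 : 1 ≤ p ^ m := Nat.one_le_pow _ _ hp.pos
  have key : p ^ m * (p ^ m - 1).choose (i - 1) = (p ^ m).choose i * i := by
    have h1 := Nat.add_one_mul_choose_eq (p ^ m - 1) (i - 1)
    have h2 : p ^ m - 1 + 1 = p ^ m := by omega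
    have h3 : i - 1 + 1 = i := by omega
    rw [h2, h3] at h1
    exact h1
  have hdvd : p ^ m ∣ (p ^ m).choose i * i := ⟨_, key.symm⟩
  set v := i.factorization p with hv
  have hpvi : p ^ v ∣ i := Nat.ordProj_dvd i p
  have hpvpos : 0 < p ^ v := Nat.pow_pos (n := v) hp.pos
  have hpvle : p ^ v ≤ i := Nat.le_of_dvd (by omega) hpvi
  have hvlt : v < i := lt_of_lt_of_le (Nat.lt_pow_self (n := v) hp.one_lt) hpvle
  have hvm : v ≤ m := by omega
  obtain ⟨u, hu⟩ := hpvi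
  have hucop : Nat.Coprime p u := by
    have h4 := Nat.coprime_ordCompl hp (show i ≠ 0 by omega)
    have h5 : u = i / p ^ v := by rw [hu, Nat.mul_div_cancel_left _ hpvpos]
    rwa [← h5] at h4
  obtain ⟨c, hc⟩ := hdvd
  have hdvd2 : p ^ (m - v) ∣ (p ^ m).choose i * u := by
    refine ⟨c, ?_⟩
    have e : ((p ^ m).choose i * u) * p ^ v = (p ^ (m - v) * c) * p ^ v := by
      have e2 : p ^ (m - v) * p ^ v = p ^ m := by rw [← pow_add]; congr 1; omega
      calc ((p ^ m).choose i * u) * p ^ v = (p ^ m).choose i * (p ^ v * u) := by ring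
        _ = p ^ m * c := by rw [← hu]; exact hc
        _ = (p ^ (m - v) * c) * p ^ v := by rw [← e2]; ring
    exact Nat.eq_of_mul_eq_mul_right hpvpos e
  have hdvd3 : p ^ (m - v) ∣ (p ^ m).choose i :=
    (Nat.Coprime.pow_left _ hucop).dvd_of_dvd_mul_right hdvd2
  calc p ^ m ∣ p ^ (m - v) * p ^ i := by
        rw [← pow_add]; exact pow_dvd_pow p (by omega)
    _ ∣ (p ^ m).choose i * p ^ i := mul_dvd_mul_right hdvd3 _

private lemma aux_nezero (p m : ℕ) (hp : p.Prime) : NeZero (p ^ m) :=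
  ⟨(Nat.pow_pos (n := m) hp.pos).ne'⟩

private lemma aux_unipotent_pow (p m n : ℕ) (hp : p.Prime)
    (B : Matrix (Fin n) (Fin n) (ZMod (p ^ m))) :
    ((p : ZMod (p ^ m)) • B + 1) ^ (p ^ m) = 1 := by
  have hcomm : Commute ((p : ZMod (p ^ m)) • B) (1 : Matrix (Fin n) (Fin n) (ZMod (p ^ m))) :=
    Commute.one_right _
  rw [hcomm.add_pow]
  rw [Finset.sum_eq_single 0]
  · simp
  · intro k hk hk0
    have hk1 : 1 ≤ k := Nat.one_le_iff_ne_zero.mpr hk0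
    have hz : (((p ^ m).choose k * p ^ k : ℕ) : ZMod (p ^ m)) = 0 := by
      rw [ZMod.natCast_eq_zero_iff]
      exact aux_pow_dvd_choose_mul_pow p m k hp hk1
    rw [smul_pow, one_pow, mul_one]
    have hCmat : (((p ^ m).choose k : ℕ) : Matrix (Fin n) (Fin n) (ZMod (p ^ m)))
        = (((p ^ m).choose k : ℕ) : ZMod (p ^ m)) • (1 : Matrix (Fin n) (Fin n) (ZMod (p ^ m))) := by
      rw [Nat.cast_smul_eq_nsmul, nsmul_eq_mul, mul_one]
    rw [smul_mul_assoc, hCmat, mul_smul_comm, mul_one, smul_smul]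
    have : (((p ^ m).choose k : ℕ) : ZMod (p ^ m)) * (p : ZMod (p ^ m)) ^ k
        = (((p ^ m).choose k * p ^ k : ℕ) : ZMod (p ^ m)) := by push_cast; ring
    rw [← mul_comm ((((p ^ m).choose k : ℕ) : ZMod (p ^ m))) _] at *
    rw [this, hz, zero_smul]
  · intro h
    simp at h

private lemma aux_p_pow_mul_eq_zero_iff (p m : ℕ) (hp : p.Prime) (k : ℕ) (hk : k ≤ m)
    (x : ZMod (p ^ m)) :
    (p : ZMod (p ^ m)) ^ k * x = 0 ↔ p ^ (m - k) ∣ x.val := by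
  haveI := aux_nezero p m hp
  have h1 : (p : ZMod (p ^ m)) ^ k * x = ((p ^ k * x.val : ℕ) : ZMod (p ^ m)) := by
    rw [Nat.cast_mul, Nat.cast_pow, ZMod.natCast_zmod_val]
  rw [h1, ZMod.natCast_eq_zero_iff]
  have h2 : p ^ m = p ^ k * p ^ (m - k) := by rw [← pow_add]; congr 1; omega
  generalize x.val = a
  rw [h2, Nat.mul_dvd_mul_iff_left (Nat.pow_pos (n := k) hp.pos)]

private lemma aux_pi_zero_iff (p m : ℕ) (hp : p.Prime) (hm : 1 ≤ m)
    (hd : (p : ℕ) ∣ p ^ m) (x : ZMod (p ^ m)) :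
    ZMod.castHom hd (ZMod p) x = 0 ↔ p ∣ x.val := by
  haveI := aux_nezero p m hp
  have h1 : ZMod.castHom hd (ZMod p) x = ((x.val : ℕ) : ZMod p) := by
    conv_lhs => rw [← ZMod.natCast_zmod_val x]
    rw [map_natCast]
  rw [h1, ZMod.natCast_eq_zero_iff]

private lemma aux_exists_mul (p m : ℕ) (hp : p.Prime) (k : ℕ) (x : ZMod (p ^ m))
    (hx : p ^ k ∣ x.val) : ∃ y : ZMod (p ^ m), x = (p : ZMod (p ^ m)) ^ k * y := by
  haveI := aux_nezero p m hp
  obtain ⟨c, hc⟩ := hx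
  refine ⟨(c : ZMod (p ^ m)), ?_⟩
  rw [← Nat.cast_pow, ← Nat.cast_mul, ← hc, ZMod.natCast_zmod_val]

private lemma aux_ker_pow (p m n : ℕ) (hp : p.Prime) (hm : 1 ≤ m)
    (hd : (p : ℕ) ∣ p ^ m) (u : GL (Fin n) (ZMod (p ^ m)))
    (hu : Matrix.GeneralLinearGroup.map (ZMod.castHom hd (ZMod p)) u = 1) :
    u ^ (p ^ m) = 1 := by
  have hmat : ((u : Matrix (Fin n) (Fin n) (ZMod (p ^ m)))).map
      (ZMod.castHom hd (ZMod p)) = 1 := by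
    have := congrArg Units.val hu
    exact this
  have hentry : ∀ i j, ∃ y : ZMod (p ^ m),
      (u : Matrix (Fin n) (Fin n) (ZMod (p ^ m))) i j - (1 : Matrix (Fin n) (Fin n) (ZMod (p ^ m))) i j
        = (p : ZMod (p ^ m)) * y := by
    intro i j
    have h0 : ZMod.castHom hd (ZMod p)
        ((u : Matrix (Fin n) (Fin n) (ZMod (p ^ m))) i j - (1 : Matrix (Fin n) (Fin n) (ZMod (p ^ m))) i j) = 0 := by
      rw [map_sub]
      have h1 : ZMod.castHom hd (ZMod p) ((u : Matrix (Fin n) (Fin n) (ZMod (p ^ m))) i j)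
          = (1 : Matrix (Fin n) (Fin n) (ZMod p)) i j := by
        rw [← hmat]; rfl
      rw [h1]
      have h2 : ZMod.castHom hd (ZMod p) ((1 : Matrix (Fin n) (Fin n) (ZMod (p ^ m))) i j)
          = (1 : Matrix (Fin n) (Fin n) (ZMod p)) i j := by
        rw [Matrix.one_apply, Matrix.one_apply]
        split_ifs
        · exact map_one _
        · exact map_zero _
      rw [h2, sub_self]
    have h3 := (aux_pi_zero_iff p m hp hm hd _).mp h0
    have h4 : p ^ 1 ∣ (((u : Matrix (Fin n) (Fin n) (ZMod (p ^ m))) i j - (1 : Matrix (Fin n) (Fin n) (ZMod (p ^ m))) i j)).val := by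
      simpa using h3
    obtain ⟨y, hy⟩ := aux_exists_mul p m hp 1 _ h4
    exact ⟨y, by simpa using hy⟩
  choose B hB using hentry
  have hrep : (u : Matrix (Fin n) (Fin n) (ZMod (p ^ m)))
      = (p : ZMod (p ^ m)) • (Matrix.of B) + 1 := by
    ext i j
    have := hB i j
    simp only [Matrix.add_apply, Matrix.smul_apply, Matrix.of_apply, smul_eq_mul]
    linear_combination this
  apply Units.ext
  rw [Units.val_pow_eq_pow_val, hrep]
  exact aux_unipotent_pow p m n hp _

private lemma aux_singer (p n : ℕ) (hp : p.Prime) (hn : 1 ≤ n)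
    (gb : GL (Fin n) (ZMod p)) (hord : orderOf gb = p ^ n - 1)
    (w : Fin n → ZMod p) (hw : w ≠ 0)
    (x : GL (Fin n) (ZMod p))
    (hx : ∀ k : ℕ, ((x : Matrix (Fin n) (Fin n) (ZMod p)) *
        (gb : Matrix (Fin n) (Fin n) (ZMod p)) ^ k).mulVec w
        = ((gb : Matrix (Fin n) (Fin n) (ZMod p)) ^ k).mulVec w) :
    x = 1 := by
  haveI : Fact p.Prime := ⟨hp⟩
  have hp2 : 2 ≤ p := hp.two_le
  have hpn1 : 1 ≤ p ^ n - 1 := by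
    have : 2 ≤ p ^ n := le_trans hp2 (Nat.le_self_pow (by omega) p)
    omega
  set A : Matrix (Fin n) (Fin n) (ZMod p) := (gb : Matrix (Fin n) (Fin n) (ZMod p)) with hA
  set S : Submodule (ZMod p) (Matrix (Fin n) (Fin n) (ZMod p)) :=
    Submodule.span (ZMod p) (Set.range fun i : Fin n => A ^ (i : ℕ)) with hS
  -- Cayley-Hamilton
  have hCH : A ^ n = ∑ i ∈ Finset.range n, (-(A.charpoly.coeff i)) • A ^ i := by
    have h0 := Matrix.aeval_self_charpoly A
    rw [Polynomial.aeval_eq_sum_range, Matrix.charpoly_natDegree_eq_dim,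
      Fintype.card_fin, Finset.sum_range_succ] at h0
    have hc : A.charpoly.coeff n = 1 := by
      have h1 := (Matrix.charpoly_monic A).coeff_natDegree
      rwa [Matrix.charpoly_natDegree_eq_dim, Fintype.card_fin] at h1
    rw [hc, one_smul] at h0
    have h2 : A ^ n = -∑ i ∈ Finset.range n, A.charpoly.coeff i • A ^ i :=
      eq_neg_of_add_eq_zero_right h0
    rw [h2, ← Finset.sum_neg_distrib]
    exact Finset.sum_congr rfl fun i _ => (neg_smul _ _).symm
  -- all powers of A lie in S
  have hmem : ∀ k : ℕ, A ^ k ∈ S := by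
    intro k
    induction k using Nat.strong_induction_on with
    | _ k IH =>
      rcases lt_or_ge k n with hk | hk
      · exact Submodule.subset_span ⟨⟨k, hk⟩, rfl⟩
      · have hAk : A ^ k = ∑ i ∈ Finset.range n,
            (-(A.charpoly.coeff i)) • A ^ (k - n + i) := by
          calc A ^ k = A ^ (k - n) * A ^ n := by rw [← pow_add]; congr 1; omega
            _ = _ := by
              rw [hCH, Finset.mul_sum]
              refine Finset.sum_congr rfl fun i hi => ?_
              rw [mul_smul_comm, ← pow_add]
        rw [hAk]
        exact Submodule.sum_mem _ fun i hi => Submodule.smul_mem _ _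
          (IH _ (by have := Finset.mem_range.mp hi; omega))
  -- injectivity of powers below the order
  have hpowinj : ∀ i j : ℕ, i < p ^ n - 1 → j < p ^ n - 1 → A ^ i = A ^ j → i = j := by
    have key : ∀ i j : ℕ, i ≤ j → j < p ^ n - 1 → A ^ i = A ^ j → i = j := by
      intro i j hij hj hEq
      have hu : gb ^ i = gb ^ j := by
        apply Units.ext
        rw [Units.val_pow_eq_pow_val, Units.val_pow_eq_pow_val]
        exact hEq
      have h1 : gb ^ (j - i) = 1 := by
        have h2 : gb ^ i * gb ^ (j - i) = gb ^ i * 1 := by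
          rw [mul_one, ← pow_add]
          rw [show i + (j - i) = j by omega]
          exact hu.symm
        exact mul_left_cancel h2
      have h3 := orderOf_dvd_of_pow_eq_one h1
      rw [hord] at h3
      have h4 : j - i = 0 := by
        rcases Nat.eq_zero_or_pos (j - i) with h | h
        · exact h
        · exact absurd (Nat.le_of_dvd h h3) (by omega)
      omega
    intro i j hi hj hEq
    rcases le_total i j with h | h
    · exact key i j h hj hEq
    · exact (key j i h hi hEq.symm).symm
  -- A ^ i ≠ 0
  haveI : Nonempty (Fin n) := Fin.pos_iff_nonempty.mp (by omega)
  have hpow_ne : ∀ i : ℕ, A ^ i ≠ 0 := by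
    intro i hzero
    have h1 : ((gb ^ i)⁻¹ : GL (Fin n) (ZMod p)).val * (gb ^ i).val = 1 := by
      rw [← Units.val_mul, inv_mul_cancel, Units.val_one]
    rw [Units.val_pow_eq_pow_val, ← hA, hzero, mul_zero] at h1
    exact one_ne_zero h1.symm
  -- the finset of powers
  set T : Finset (Matrix (Fin n) (Fin n) (ZMod p)) :=
    insert 0 (Finset.image (fun i : Fin (p ^ n - 1) => A ^ (i : ℕ)) Finset.univ) with hT
  have hTcard : T.card = p ^ n := by
    rw [hT, Finset.card_insert_of_notMem, Finset.card_image_of_injective _ ?inj]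
    · rw [Finset.card_univ, Fintype.card_fin]
      omega
    case inj =>
      intro i j hij
      exact Fin.ext (hpowinj _ _ i.isLt j.isLt hij)
    · intro hmem0
      obtain ⟨i, _, h⟩ := Finset.mem_image.mp hmem0
      exact hpow_ne _ h
  haveI : Fintype ↥S := Fintype.ofFinite _
  have hTsub : T ⊆ (S : Set (Matrix (Fin n) (Fin n) (ZMod p))).toFinset := by
    intro a ha
    rw [Set.mem_toFinset]
    rw [hT] at ha
    rcases Finset.mem_insert.mp ha with h | h
    · rw [h]; exact Submodule.zero_mem S
    · obtain ⟨i, _, rfl⟩ := Finset.mem_image.mp h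
      exact hmem _
  have hScard : (S : Set (Matrix (Fin n) (Fin n) (ZMod p))).toFinset.card
      = p ^ Module.finrank (ZMod p) ↥S := by
    rw [Set.toFinset_card]
    have := Module.card_eq_pow_finrank (K := ZMod p) (V := ↥S)
    rwa [ZMod.card] at this
  have hfrle : Module.finrank (ZMod p) ↥S ≤ n := by
    classical
    have h1 := finrank_span_le_card (R := ZMod p)
      (Set.range fun i : Fin n => A ^ (i : ℕ))
    refine le_trans h1 ?_
    rw [Set.toFinset_range]
    exact le_trans (Finset.card_image_le) (by simp)
  have hcard_le : p ^ n ≤ p ^ Module.finrank (ZMod p) ↥S := by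
    rw [← hTcard, ← hScard]
    exact Finset.card_le_card hTsub
  have hfr : Module.finrank (ZMod p) ↥S = n := by
    have := Nat.pow_le_pow_iff_right hp2 |>.mp hcard_le
    omega
  have hTeq : T = (S : Set (Matrix (Fin n) (Fin n) (ZMod p))).toFinset := by
    apply Finset.eq_of_subset_of_card_le hTsub
    rw [hScard, hfr, hTcard]
  -- elements of S are 0 or powers of A
  have hSelem : ∀ a ∈ S, a = 0 ∨ ∃ i : ℕ, a = A ^ i := by
    intro a ha
    have : a ∈ T := by
      rw [hTeq, Set.mem_toFinset]; exact ha
    rcases Finset.mem_insert.mp this with h | h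
    · exact Or.inl h
    · obtain ⟨i, _, rfl⟩ := Finset.mem_image.mp h
      exact Or.inr ⟨i, rfl⟩
  -- the evaluation map
  set ev : ↥S →ₗ[ZMod p] (Fin n → ZMod p) :=
    { toFun := fun s => Matrix.mulVec s.1 w
      map_add' := fun a b => Matrix.add_mulVec _ _ _
      map_smul' := fun c a => by
        simp only [RingHom.id_apply, SetLike.val_smul]
        exact Matrix.smul_mulVec _ _ _ } with hev
  have hinj : Function.Injective ev := by
    rw [← LinearMap.ker_eq_bot]
    rw [Submodule.eq_bot_iff]
    rintro ⟨a, haS⟩ hker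
    have ha0 : Matrix.mulVec a w = 0 := hker
    rcases hSelem a haS with h | ⟨i, rfl⟩
    · exact Subtype.ext h
    · exfalso
      apply hw
      have h1 : ((gb ^ i)⁻¹ : GL (Fin n) (ZMod p)).val.mulVec ((gb ^ i).val.mulVec w) = w := by
        rw [Matrix.mulVec_mulVec, ← Units.val_mul, inv_mul_cancel, Units.val_one,
          Matrix.one_mulVec]
      rw [Units.val_pow_eq_pow_val, ← hA, ha0, Matrix.mulVec_zero] at h1
      exact h1.symm
  have hsurj : Function.Surjective ev := by
    have heq : Module.finrank (ZMod p) ↥S = Module.finrank (ZMod p) (Fin n → ZMod p) := by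
      rw [hfr, Module.finrank_pi, Fintype.card_fin]
    exact (LinearMap.injective_iff_surjective_of_finrank_eq_finrank heq).mp hinj
  -- x fixes everything in the image of ev
  have hfixS : ∀ a ∈ S, ((x : Matrix (Fin n) (Fin n) (ZMod p)) * a).mulVec w = a.mulVec w := by
    intro a ha
    induction ha using Submodule.span_induction with
    | mem a h => obtain ⟨i, rfl⟩ := h; exact hx i
    | zero => rw [mul_zero]
    | add a b _ _ iha ihb => rw [mul_add, Matrix.add_mulVec, Matrix.add_mulVec, iha, ihb]
    | smul c a _ iha =>
        rw [mul_smul_comm, Matrix.smul_mulVec, Matrix.smul_mulVec, iha]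
  -- conclude x = 1
  have hfixall : ∀ y : Fin n → ZMod p, (x : Matrix (Fin n) (Fin n) (ZMod p)).mulVec y = y := by
    intro y
    obtain ⟨s, hs⟩ := hsurj y
    have h1 : Matrix.mulVec s.1 w = y := hs
    rw [← h1, Matrix.mulVec_mulVec]
    exact hfixS s.1 s.2
  apply Units.ext
  rw [Units.val_one]
  ext i j
  have h1 := congrFun (hfixall (Pi.single j 1)) i
  rw [Matrix.mulVec_single] at h1
  simp only [Pi.smul_apply, Matrix.col_apply, MulOpposite.op_one, one_smul] at h1
  rw [h1, Matrix.one_apply, Pi.single_apply]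

/-- Let `E` be a `p'`-subgroup of `GL n (ZMod (p ^ m))` containing a Singer cycle, and let
`H` be a nontrivial normal subgroup of `E`. Then `H` fixes no nonzero element of
`Q = (ZMod (p ^ m)) ^ n`. -/
theorem normal_subgroup_no_fixed_points_homocyclic (p n m : ℕ)
    (hp : p.Prime) (hn : 1 ≤ n) (hm : 1 ≤ m)
    (E : Subgroup (GL (Fin n) (ZMod (p ^ m)))) (hE : ¬ p ∣ Nat.card E)
    (g : GL (Fin n) (ZMod (p ^ m))) (hgE : g ∈ E) (hg : orderOf g = p ^ n - 1)
    (H : Subgroup E) (hHne : H ≠ ⊥) (hHnormal : H.Normal)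
    (v : Fin n → ZMod (p ^ m))
    (hfix : ∀ h : E, h ∈ H →
      ((h : GL (Fin n) (ZMod (p ^ m))) : Matrix (Fin n) (Fin n) (ZMod (p ^ m))).mulVec v = v) :
    v = 0 := by
  classical
  by_contra hv
  haveI : Fact p.Prime := ⟨hp⟩
  haveI := aux_nezero p m hp
  have hp2 : 2 ≤ p := hp.two_le
  have hpn1 : 1 ≤ p ^ n - 1 := by
    have : 2 ≤ p ^ n := le_trans hp2 (Nat.le_self_pow (by omega) p)
    omega
  have hd : (p : ℕ) ∣ p ^ m := dvd_pow_self p (by omega)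
  set φ : GL (Fin n) (ZMod (p ^ m)) →* GL (Fin n) (ZMod p) :=
    Matrix.GeneralLinearGroup.map (ZMod.castHom hd (ZMod p)) with hφ
  have hpcop : Nat.Coprime p (p ^ n - 1) := by
    apply (hp.coprime_iff_not_dvd).mpr
    intro hdvd
    have h1 : (p : ℕ) ∣ p ^ n := dvd_pow_self p (by omega)
    have h2 := Nat.dvd_sub h1 hdvd
    rw [Nat.sub_sub_self (Nat.one_le_pow _ _ (by omega))] at h2
    have := Nat.le_of_dvd one_pos h2
    omega
  -- Step 1 : the order of φ g is p ^ n - 1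
  have hordbar : orderOf (φ g) = p ^ n - 1 := by
    have ha1 : orderOf (φ g) ∣ p ^ n - 1 := by
      rw [← hg]; exact orderOf_map_dvd φ g
    have hker : φ (g ^ orderOf (φ g)) = 1 := by
      rw [map_pow, pow_orderOf_eq_one]
    have h2 : (g ^ orderOf (φ g)) ^ (p ^ m) = 1 :=
      aux_ker_pow p m n hp hm hd _ hker
    have h3 : orderOf g ∣ orderOf (φ g) * p ^ m :=
      orderOf_dvd_of_pow_eq_one (by rw [pow_mul]; exact h2)
    rw [hg] at h3
    have h4 : p ^ n - 1 ∣ orderOf (φ g) :=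
      (Nat.Coprime.pow_right m (Nat.coprime_comm.mp hpcop)).dvd_of_dvd_mul_right h3
    exact Nat.dvd_antisymm ha1 h4
  -- Step 2 : a nontrivial element of H
  obtain ⟨h0, h0H, h0ne⟩ : ∃ x ∈ H, x ≠ (1 : ↥E) := by
    rcases Subgroup.bot_or_exists_ne_one H with h | h
    · exact absurd h hHne
    · exact h
  -- Step 3 : φ ↑h0 ≠ 1
  have hbar_ne : φ (↑h0 : GL (Fin n) (ZMod (p ^ m))) ≠ 1 := by
    intro heq
    have h2 : ((↑h0 : GL (Fin n) (ZMod (p ^ m)))) ^ (p ^ m) = 1 :=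
      aux_ker_pow p m n hp hm hd _ heq
    have h3 : orderOf (↑h0 : GL (Fin n) (ZMod (p ^ m))) ∣ p ^ m :=
      orderOf_dvd_of_pow_eq_one h2
    have h4 : orderOf (↑h0 : GL (Fin n) (ZMod (p ^ m))) = orderOf h0 :=
      orderOf_injective E.subtype Subtype.coe_injective h0
    have h5 : orderOf h0 ∣ Nat.card ↥E := orderOf_dvd_natCard h0
    have hcop2 : Nat.Coprime (p ^ m) (Nat.card ↥E) :=
      Nat.Coprime.pow_left m ((hp.coprime_iff_not_dvd).mpr hE)
    have h6 : orderOf (↑h0 : GL (Fin n) (ZMod (p ^ m))) ∣ 1 := by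
      rw [← hcop2]
      exact Nat.dvd_gcd h3 (h4 ▸ h5)
    have h7 : (↑h0 : GL (Fin n) (ZMod (p ^ m))) = 1 :=
      orderOf_eq_one_iff.mp (Nat.dvd_one.mp h6)
    exact h0ne (Subtype.ext (by rw [h7]; rfl))
  -- Step 4 : construct a nonzero fixed vector over ZMod p
  have hPexists : ∃ i : ℕ, (p : (ZMod (p ^ m))) ^ (i + 1) • v = 0 := by
    refine ⟨m - 1, ?_⟩
    have : (p : (ZMod (p ^ m))) ^ (m - 1 + 1) = 0 := by
      rw [show m - 1 + 1 = m by omega, ← Nat.cast_pow, ZMod.natCast_self]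
    rw [this, zero_smul]
  set j := Nat.find hPexists with hj
  have hj1 : (p : (ZMod (p ^ m))) ^ (j + 1) • v = 0 := Nat.find_spec hPexists
  have hj0 : (p : (ZMod (p ^ m))) ^ j • v ≠ 0 := by
    rcases Nat.eq_zero_or_pos j with h | h
    · rw [h, pow_zero, one_smul]; exact hv
    · have := Nat.find_min hPexists (show j - 1 < j by omega)
      rw [show j - 1 + 1 = j by omega] at this
      exact this
  set w : Fin n → ZMod (p ^ m) := (p : (ZMod (p ^ m))) ^ j • v with hw
  have hpw : ∀ i, (p : (ZMod (p ^ m))) * w i = 0 := by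
    intro i
    have : (p : (ZMod (p ^ m))) • w = 0 := by
      rw [hw, smul_smul, ← pow_succ']
      exact hj1
    exact congrFun this i
  have hjm : j ≤ m - 1 := Nat.find_min' hPexists (by
    have : (p : (ZMod (p ^ m))) ^ (m - 1 + 1) = 0 := by
      rw [show m - 1 + 1 = m by omega, ← Nat.cast_pow, ZMod.natCast_self]
    rw [this, zero_smul])
  have hentry : ∀ i, ∃ c : ZMod (p ^ m), w i = (p : (ZMod (p ^ m))) ^ (m - 1) * c := by
    intro i
    apply aux_exists_mul p m hp (m - 1) (w i)
    have h1 := (aux_p_pow_mul_eq_zero_iff p m hp 1 (by omega) (w i)).mp (by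
      rw [pow_one]; exact hpw i)
    rwa [show m - 1 = m - 1 from rfl] at h1
  choose u hu using hentry
  set wbar : Fin n → ZMod p := fun i => ZMod.castHom hd (ZMod p) (u i) with hwbar
  have hwbar_ne : wbar ≠ 0 := by
    intro h0'
    apply hj0
    funext i
    have h1 : ZMod.castHom hd (ZMod p) (u i) = 0 := congrFun h0' i
    have h2 : p ∣ (u i).val := (aux_pi_zero_iff p m hp hm hd _).mp h1
    obtain ⟨y, hy⟩ := by
      have := aux_exists_mul p m hp 1 (u i) (by simpa using h2)
      exact this
    have : w i = 0 := by
      rw [hu i, hy, pow_one, ← mul_assoc, ← pow_succ, show m - 1 + 1 = m by omega,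
        ← Nat.cast_pow, ZMod.natCast_self, zero_mul]
    exact this
  -- fixed vectors transfer to ZMod p
  have hwfix : ∀ h' : ↥E, h' ∈ H →
      ((φ (↑h' : GL (Fin n) (ZMod (p ^ m))) : GL (Fin n) (ZMod p)) :
        Matrix (Fin n) (Fin n) (ZMod p)).mulVec wbar = wbar := by
    intro h' h'H
    set M : Matrix (Fin n) (Fin n) (ZMod (p ^ m)) :=
      ((h' : GL (Fin n) (ZMod (p ^ m))) : Matrix (Fin n) (Fin n) (ZMod (p ^ m))) with hM
    have hMv : M.mulVec v = v := hfix h' h'H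
    have hMw : M.mulVec w = w := by
      rw [hw, Matrix.mulVec_smul, hMv]
    have hwu : w = (p : ZMod (p ^ m)) ^ (m - 1) • u := by
      funext i
      rw [Pi.smul_apply, smul_eq_mul]
      exact hu i
    have hzero : ∀ i, (p : ZMod (p ^ m)) ^ (m - 1) * ((M.mulVec u - u) i) = 0 := by
      intro i
      have hz : (p : ZMod (p ^ m)) ^ (m - 1) • (M.mulVec u - u) = 0 := by
        rw [smul_sub, ← Matrix.mulVec_smul, ← hwu, hMw, sub_self]
      exact congrFun hz i
    have hpi : ∀ i, ZMod.castHom hd (ZMod p) ((M.mulVec u) i)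
        = ZMod.castHom hd (ZMod p) (u i) := by
      intro i
      have h1 : p ^ (m - (m - 1)) ∣ ((M.mulVec u - u) i).val :=
        (aux_p_pow_mul_eq_zero_iff p m hp (m - 1) (by omega) _).mp (hzero i)
      have h2 : p ∣ ((M.mulVec u - u) i).val := by
        rwa [show m - (m - 1) = 1 by omega, pow_one] at h1
      have h3 : ZMod.castHom hd (ZMod p) ((M.mulVec u - u) i) = 0 :=
        (aux_pi_zero_iff p m hp hm hd _).mpr h2
      have h4 : (M.mulVec u - u) i = (M.mulVec u) i - u i := rfl
      rw [h4, map_sub, sub_eq_zero] at h3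
      exact h3
    have hφmat : ((φ (↑h' : GL (Fin n) (ZMod (p ^ m))) : GL (Fin n) (ZMod p)) :
        Matrix (Fin n) (Fin n) (ZMod p)) = M.map (ZMod.castHom hd (ZMod p)) := rfl
    rw [hφmat]
    funext i
    have h5 := RingHom.map_mulVec (ZMod.castHom hd (ZMod p)) M u i
    have h6 : (M.map (ZMod.castHom hd (ZMod p))).mulVec wbar i
        = ZMod.castHom hd (ZMod p) ((M.mulVec u) i) := by
      rw [hwbar]
      exact h5.symm
    rw [h6, hpi i]
  -- Step 5 : apply the Singer lemma
  have hsing : φ (↑h0 : GL (Fin n) (ZMod (p ^ m))) = 1 := by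
    apply aux_singer p n hp hn (φ g) hordbar wbar hwbar_ne
    intro k
    set e : ↥E := (⟨g, hgE⟩ : ↥E) ^ k with he
    have hcH : e⁻¹ * h0 * e ∈ H := by
      have hcj := hHnormal.conj_mem h0 h0H e⁻¹
      rwa [inv_inv] at hcj
    set c : ↥E := e⁻¹ * h0 * e with hc
    have h1 : h0 * e = e * c := by rw [hc]; group
    have he1 : ((e : ↥E) : GL (Fin n) (ZMod (p ^ m))) = g ^ k := by
      rw [he]
      exact SubmonoidClass.coe_pow _ k
    have h2 : (↑h0 : GL (Fin n) (ZMod (p ^ m))) * g ^ k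
        = g ^ k * (↑c : GL (Fin n) (ZMod (p ^ m))) := by
      have hcoe := congrArg (fun a : ↥E => (a : GL (Fin n) (ZMod (p ^ m)))) h1
      simp only [Subgroup.coe_mul] at hcoe
      rwa [he1] at hcoe
    have h3 := congrArg φ h2
    rw [_root_.map_mul, _root_.map_mul, map_pow] at h3
    have h4 := congrArg Units.val h3
    simp only [Units.val_mul, Units.val_pow_eq_pow_val] at h4
    rw [h4, ← Matrix.mulVec_mulVec, hwfix _ hcH]
  exact hbar_ne hsing
end
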